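/- If A is a local Prüfer ring, J ⊆ Rad(B), J ⊆ f(A), f⁻¹(J) ⊆ Z(A), and f maps regular elements of A to regular elements of B, then Z(A ⋈^f J) = {(a, f(a)+j) : a ∈ Z(A), j ∈ J}. -/

import Mathlib

variable {A B : Type*} [CommRing A] [CommRing B]

/-- The amalgamation `A ⋈^f J` of `A` and `B` along the ideal `J` with respect to `f`,
as a subring of `A × B`. -/
def amalg (f : A →+* B) (J : Ideal B) : Subring (A × B) where
  carrier := {p | ∃ a, ∃ j ∈ J, p = (a, f a + j)}
  zero_mem' := ⟨0, 0, J.zero_mem, by ext <;> simp⟩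
  one_mem' := ⟨1, 0, J.zero_mem, by ext <;> simp⟩
  add_mem' := by
    rintro _ _ ⟨a, j, hj, rfl⟩ ⟨a', j', hj', rfl⟩
    exact ⟨a + a', j + j', J.add_mem hj hj', by simp [Prod.ext_iff]; ring⟩
  neg_mem' := by
    rintro _ ⟨a, j, hj, rfl⟩
    exact ⟨-a, -j, J.neg_mem hj, by simp [Prod.ext_iff]; ring⟩
  mul_mem' := by
    rintro _ _ ⟨a, j, hj, rfl⟩ ⟨a', j', hj', rfl⟩
    exact ⟨a * a', f a * j' + j * f a' + j * j',
      J.add_mem (J.add_mem (J.mul_mem_left _ hj') (J.mul_mem_right _ hj)) (J.mul_mem_right _ hj),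
      by simp [Prod.ext_iff]; ring⟩

/-- The set of zero-divisors of a ring. -/
def zdSet (R : Type*) [CommRing R] : Set R := {a | ∃ b, b ≠ 0 ∧ a * b = 0}

/-- The content ideal of a polynomial: the ideal generated by its coefficients. -/
def contentIdeal {R : Type*} [CommRing R] (p : Polynomial R) : Ideal R :=
  Ideal.span (Set.range p.coeff)

/-- A polynomial is Gaussian if `c(ph) = c(p) c(h)` for every polynomial `h`. -/
def IsGaussianPoly {R : Type*} [CommRing R] (p : Polynomial R) : Prop :=
  ∀ h : Polynomial R, contentIdeal (p * h) = contentIdeal p * contentIdeal h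

/-- A Gaussian ring. -/
def IsGaussianRing (R : Type*) [CommRing R] : Prop :=
  ∀ p q : Polynomial R, contentIdeal (p * q) = contentIdeal p * contentIdeal q

/-- A Prüfer ring: every finitely generated regular ideal is invertible
(in the total ring of quotients). -/
def IsPruferRing (R : Type*) [CommRing R] : Prop :=
  ∀ I : Ideal R, I.FG → (∃ r ∈ I, r ∈ nonZeroDivisors R) →
    ∃ T : FractionalIdeal (nonZeroDivisors R) (FractionRing R),
      (I : FractionalIdeal (nonZeroDivisors R) (FractionRing R)) * T = 1

/-- Lemma 2.6: description of the zero-divisors of `A ⋈^f J` when `A` is local Prüfer. -/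

lemma zdSet_iff_not_mem {R : Type*} [CommRing R] {a : R} :
    a ∈ zdSet R ↔ a ∉ nonZeroDivisors R := by
  constructor
  · rintro ⟨b, hb, hab⟩ h
    exact hb (mem_nonZeroDivisors_iff_right.mp h b (by rwa [mul_comm]))
  · intro h
    rw [mem_nonZeroDivisors_iff_right] at h
    push_neg at h
    obtain ⟨x, h1, h2⟩ := h
    exact ⟨x, h2, by rwa [mul_comm]⟩

lemma prufer_dvd [IsLocalRing A] (hP : IsPruferRing A)
    {a c : A} (ha : a ∈ nonZeroDivisors A) (hc : c ∈ zdSet A) : ∃ t, c = a * t := by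
  classical
  set K := FractionRing A with hK
  have hI : (Ideal.span {a, c} : Ideal A).FG := ⟨{a, c}, by simp⟩
  obtain ⟨T, hT⟩ := hP (Ideal.span {a, c}) hI
    ⟨a, Ideal.subset_span (by simp), ha⟩
  set a' := algebraMap A K a with ha'
  set c' := algebraMap A K c with hc'
  have hsub : (Submodule.span A {a', c'}) * (T : Submodule A K) = 1 := by
    have h2 := congrArg (fun I : FractionalIdeal (nonZeroDivisors A) K =>
      (I : Submodule A K)) hT
    simp only [FractionalIdeal.coe_mul, FractionalIdeal.coe_one,
      FractionalIdeal.coe_coeIdeal] at h2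
    rwa [IsLocalization.coeSubmodule_span, Set.image_insert_eq, Set.image_singleton] at h2
  have hmem1 : (1 : K) ∈ (Submodule.span A {a'}) * (T : Submodule A K) ⊔
      (Submodule.span A {c'}) * (T : Submodule A K) := by
    rw [← Submodule.sup_mul, ← Submodule.span_insert, hsub]
    exact Submodule.mem_one.mpr ⟨1, map_one _⟩
  obtain ⟨y, hy, z, hz, hyz⟩ := Submodule.mem_sup.mp hmem1
  obtain ⟨u, hu, hau⟩ := Submodule.mem_span_singleton_mul.mp hy
  obtain ⟨v, hv, hcv⟩ := Submodule.mem_span_singleton_mul.mp hz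
  have inj : Function.Injective (algebraMap A K) := IsFractionRing.injective A K
  have himg : ∀ x ∈ ({a', c'} : Set K), ∀ w ∈ (T : Submodule A K), ∃ p : A,
      algebraMap A K p = x * w := by
    intro x hx w hw
    have : x * w ∈ (Submodule.span A {a', c'}) * (T : Submodule A K) :=
      Submodule.mul_mem_mul (Submodule.subset_span hx) hw
    rw [hsub] at this
    exact Submodule.mem_one.mp this
  obtain ⟨p, hp⟩ := himg a' (by simp) u hu
  obtain ⟨q, hq⟩ := himg c' (by simp) u hu
  obtain ⟨r, hr⟩ := himg c' (by simp) v hv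
  obtain ⟨s, hs⟩ := himg a' (by simp) v hv
  have hpr : p + r = 1 := by
    apply inj
    rw [map_add, map_one, hp, hr, hau, hcv, hyz]
  have hunit : IsUnit p ∨ IsUnit r := by
    have : IsUnit (p + r) := by rw [hpr]; exact isUnit_one
    exact IsLocalRing.isUnit_or_isUnit_of_isUnit_add this
  rcases hunit with hup | hur
  · have hcp : c * p = a * q := by
      apply inj
      rw [map_mul, map_mul, hp, hq, ← ha', ← hc']
      ring
    refine ⟨q * ↑hup.unit⁻¹, ?_⟩
    have h1 : (↑hup.unit⁻¹ : A) * p = 1 := hup.val_inv_mul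
    calc c = c * ((↑hup.unit⁻¹ : A) * p) := by rw [h1, mul_one]
      _ = (c * p) * (↑hup.unit⁻¹ : A) := by ring
      _ = (a * q) * (↑hup.unit⁻¹ : A) := by rw [hcp]
      _ = a * (q * ↑hup.unit⁻¹) := by ring
  · exfalso
    have har : a * r = c * s := by
      apply inj
      rw [map_mul, map_mul, hr, hs, ← ha', ← hc']
      ring
    obtain ⟨zz, hzz, hczz⟩ := hc
    have h1 : (↑hur.unit⁻¹ : A) * r = 1 := hur.val_inv_mul
    have haz : a * zz = 0 := by
      calc a * zz = a * ((↑hur.unit⁻¹ : A) * r) * zz := by rw [h1, mul_one]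
        _ = (a * r) * (↑hur.unit⁻¹ : A) * zz := by ring
        _ = (c * s) * (↑hur.unit⁻¹ : A) * zz := by rw [har]
        _ = (c * zz) * (s * (↑hur.unit⁻¹ : A)) := by ring
        _ = 0 := by rw [hczz, zero_mul]
    exact hzz (mem_nonZeroDivisors_iff_right.mp ha zz (by rwa [mul_comm]))

theorem zeroDivisors_amalg_eq (f : A →+* B) (J : Ideal B) [IsLocalRing A]
    (hP : IsPruferRing A) (hJ : J ≠ ⊤) (hrad : J ≤ (⊥ : Ideal B).jacobson)
    (hJf : (J : Set B) ⊆ Set.range f) (hpre : f ⁻¹' (J : Set B) ⊆ zdSet A)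
    (hreg : ∀ a ∈ nonZeroDivisors A, f a ∈ nonZeroDivisors B) :
    zdSet ↥(amalg f J) = {x : ↥(amalg f J) | (x : A × B).1 ∈ zdSet A} := by
  classical
  ext x
  obtain ⟨a, jj, hjj, hx⟩ := x.2
  have hx1 : (x : A × B).1 = a := by rw [hx]
  simp only [Set.mem_setOf_eq, hx1]
  constructor
  · rintro ⟨y, hy0, hxy⟩
    obtain ⟨b, j₂, hj₂, hyv⟩ := y.2
    have h2 : ((x : A × B)) * ((y : A × B)) = 0 := by
      rw [← Subring.coe_mul, hxy, ZeroMemClass.coe_zero]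
    rw [hx, hyv, Prod.mk_mul_mk, Prod.mk_eq_zero] at h2
    obtain ⟨hab, hsecond⟩ := h2
    by_cases hb : b = 0
    · subst hb
      rw [map_zero, zero_add] at hsecond
      have hj₂ne : j₂ ≠ 0 := by
        intro h
        apply hy0
        apply Subtype.ext
        rw [hyv, h, ZeroMemClass.coe_zero]
        simp
      by_contra haz
      have ha : a ∈ nonZeroDivisors A := not_not.mp (mt zdSet_iff_not_mem.mpr haz)
      obtain ⟨c, hcf⟩ := hJf hjj
      have hcz : c ∈ zdSet A := hpre (by simp only [Set.mem_preimage, hcf]; exact hjj)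
      obtain ⟨t, hct⟩ := prufer_dvd hP ha hcz
      obtain ⟨z, hz0, hcz0⟩ := hcz
      have htz : t * z = 0 := by
        apply mem_nonZeroDivisors_iff_right.mp ha
        have : (t * z) * a = c * z := by rw [hct]; ring
        rw [this, hcz0]
      have htnu : t ∈ nonunits A := by
        intro hut
        apply hz0
        obtain ⟨tu, htu⟩ := hut
        calc z = (↑tu⁻¹ * t) * z := by rw [← htu, Units.inv_mul, one_mul]
          _ = ↑tu⁻¹ * (t * z) := by ring
          _ = 0 := by rw [htz, mul_zero]
      have hu1t : IsUnit (1 + t) := by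
        have hnt : -t ∈ nonunits A := by
          intro h
          exact htnu (by simpa using h.neg)
        have := IsLocalRing.isUnit_one_sub_self_of_mem_nonunits (-t) hnt
        rwa [sub_neg_eq_add] at this
      have hacreg : a + c ∈ nonZeroDivisors A := by
        have heq : a + c = a * (1 + t) := by rw [hct]; ring
        rw [heq]
        exact mul_mem ha hu1t.mem_nonZeroDivisors
      have hfreg := hreg _ hacreg
      have hfeq : f (a + c) = f a + jj := by rw [map_add, hcf]
      apply hj₂ne
      apply mem_nonZeroDivisors_iff_right.mp hfreg
      rw [hfeq, mul_comm]
      exact hsecond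
    · exact ⟨b, hb, hab⟩
  · rintro ⟨b, hb0, hab⟩
    obtain ⟨c, hcf⟩ := hJf hjj
    have hfcbJ : f (c * b) ∈ J := by
      rw [map_mul, hcf]
      exact J.mul_mem_right _ hjj
    by_cases hfcb : f (c * b) = 0
    · refine ⟨⟨(b, f b), ⟨b, 0, J.zero_mem, by simp⟩⟩, ?_, ?_⟩
      · intro h
        apply hb0
        have := congrArg (fun y : ↥(amalg f J) => (y : A × B).1) h
        simpa using this
      · apply Subtype.ext
        rw [Subring.coe_mul, hx, ZeroMemClass.coe_zero]
        show (a, f a + jj) * (b, f b) = 0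
        rw [Prod.mk_mul_mk, Prod.mk_eq_zero]
        refine ⟨hab, ?_⟩
        have : (f a + jj) * f b = f (a * b) + f (c * b) := by
          rw [map_mul, map_mul, ← hcf]; ring
        rw [this, hab, map_zero, hfcb, add_zero]
    · refine ⟨⟨(c * b, 0), ⟨c * b, -(f (c * b)), J.neg_mem hfcbJ, by simp⟩⟩, ?_, ?_⟩
      · intro h
        apply hfcb
        have := congrArg (fun y : ↥(amalg f J) => (y : A × B).1) h
        simp only [ZeroMemClass.coe_zero, Prod.fst_zero] at this
        rw [this, map_zero]
      · apply Subtype.ext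
        rw [Subring.coe_mul, hx, ZeroMemClass.coe_zero]
        show (a, f a + jj) * (c * b, 0) = 0
        rw [Prod.mk_mul_mk, Prod.mk_eq_zero]
        constructor
        · calc a * (c * b) = c * (a * b) := by ring
            _ = 0 := by rw [hab, mul_zero]
        · rw [mul_zero]
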